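/- (No-signaling bound on the guessing probability.) Let ρ be a density matrix on ℂ^d, let ρ_1,…,ρ_N and σ_1,…,σ_N be density matrices, and let p_1,…,p_N ∈ [0,1] with Σ_x p_x > 0 be such that ρ = p_x ρ_x + (1 − p_x) σ_x for every x (N decompositions of one ensemble). Then for every N-outcome POVM (M_x)_{x=1}^N, Σ_x p_x tr(M_x ρ_x) ≤ 1; equivalently, with priors q_x = p_x / Σ_y p_y, the guessing probability for {q_x, ρ_x} is at most 1/(Σ_x p_x). -/

import Mathlib

open BigOperators Matrix
open scoped ComplexOrder

/-- A density matrix: positive semidefinite with trace 1. -/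
def IsDensityMatrix {d : ℕ} (ρ : Matrix (Fin d) (Fin d) ℂ) : Prop :=
  ρ.PosSemidef ∧ ρ.trace = 1

/-- An N-outcome POVM: positive semidefinite elements summing to the identity. -/
def IsPOVM {d N : ℕ} (M : Fin N → Matrix (Fin d) (Fin d) ℂ) : Prop :=
  (∀ x, (M x).PosSemidef) ∧ ∑ x, M x = 1

lemma psd_trace_nonneg {d : ℕ} {A : Matrix (Fin d) (Fin d) ℂ}
    (hA : A.PosSemidef) : 0 ≤ A.trace := by
  rw [Matrix.trace]
  apply Finset.sum_nonneg
  intro i _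
  exact hA.diag_nonneg

lemma psd_mul_trace_nonneg {d : ℕ} {A B : Matrix (Fin d) (Fin d) ℂ}
    (hA : A.PosSemidef) (hB : B.PosSemidef) : 0 ≤ (A * B).trace := by
  obtain ⟨C, hC⟩ : ∃ C : Matrix (Fin d) (Fin d) ℂ, B = Cᴴ * C := by
    open scoped MatrixOrder Matrix.Norms.L2Operator in
    exact CStarAlgebra.nonneg_iff_eq_star_mul_self.mp hB.nonneg
  have : (A * B).trace = (C * A * Cᴴ).trace := by
    rw [hC, ← Matrix.mul_assoc, Matrix.trace_mul_cycle, Matrix.mul_assoc]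
  rw [this]
  exact psd_trace_nonneg (hA.mul_mul_conjTranspose_same C)

/-- no-signaling bound: if one ensemble `ρ` admits `N` decompositions
`ρ = p_x ρ_x + (1 − p_x) σ_x`, then every POVM satisfies `Σ_x p_x tr(M_x ρ_x) ≤ 1`;
equivalently, with priors `q_x = p_x / Σ_y p_y`, the guessing probability for
`{q_x, ρ_x}` is at most `1 / Σ_x p_x`. -/
theorem no_signaling_bound
    (d N : ℕ) (ρ : Matrix (Fin d) (Fin d) ℂ) (hρ : IsDensityMatrix ρ)
    (ρs σs : Fin N → Matrix (Fin d) (Fin d) ℂ)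
    (hρs : ∀ x, IsDensityMatrix (ρs x)) (hσs : ∀ x, IsDensityMatrix (σs x))
    (p : Fin N → ℝ) (hp0 : ∀ x, 0 ≤ p x) (hp1 : ∀ x, p x ≤ 1)
    (hppos : 0 < ∑ x, p x)
    (hdec : ∀ x, ρ = (p x : ℂ) • ρs x + ((1 - p x : ℝ) : ℂ) • σs x) :
    ∀ M : Fin N → Matrix (Fin d) (Fin d) ℂ, IsPOVM M →
      (∑ x, p x * ((M x * ρs x).trace).re ≤ 1) ∧
      (∑ x, (p x / ∑ y, p y) * ((M x * ρs x).trace).re ≤ 1 / ∑ x, p x) := by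
  intro M hM
  have key : ∑ x, p x * ((M x * ρs x).trace).re ≤ 1 := by
    have hterm : ∀ x, p x * ((M x * ρs x).trace).re ≤ ((M x * ρ).trace).re := by
      intro x
      have hρeq : (M x * ρ).trace
          = (p x : ℂ) * (M x * ρs x).trace + ((1 - p x : ℝ) : ℂ) * (M x * σs x).trace := by
        rw [hdec x, Matrix.mul_add, Matrix.trace_add, Matrix.mul_smul, Matrix.mul_smul,
          Matrix.trace_smul, Matrix.trace_smul, smul_eq_mul, smul_eq_mul]
      have hσ : 0 ≤ ((M x * σs x).trace).re :=
        (Complex.le_def.mp (psd_mul_trace_nonneg (hM.1 x) (hσs x).1)).1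
      have : ((M x * ρ).trace).re
          = p x * ((M x * ρs x).trace).re + (1 - p x) * ((M x * σs x).trace).re := by
        rw [hρeq]; simp
      rw [this]
      nlinarith [hσ, hp1 x]
    calc ∑ x, p x * ((M x * ρs x).trace).re
        ≤ ∑ x, ((M x * ρ).trace).re := Finset.sum_le_sum fun x _ => hterm x
      _ = 1 := by
          have : ∑ x, (M x * ρ).trace = ((∑ x, M x) * ρ).trace := by
            rw [Finset.sum_mul, Matrix.trace_sum]
          rw [← Complex.re_sum, this, hM.2, Matrix.one_mul, hρ.2]
          simp
  refine ⟨key, ?_⟩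
  have h2 : ∑ x, (p x / ∑ y, p y) * ((M x * ρs x).trace).re
      = (∑ y, p y)⁻¹ * ∑ x, p x * ((M x * ρs x).trace).re := by
    rw [Finset.mul_sum]; congr 1; ext x; ring
  rw [h2, one_div]
  calc (∑ y, p y)⁻¹ * ∑ x, p x * ((M x * ρs x).trace).re
      ≤ (∑ y, p y)⁻¹ * 1 := by
        exact mul_le_mul_of_nonneg_left key (inv_nonneg.mpr hppos.le)
    _ = (∑ x, p x)⁻¹ := by rw [mul_one]
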